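/- Let G be a connected finite simple graph with nonnegative edge weights w, let C be a cycle of G, and let s be a vertex of G. Then there exist a vertex y and two distinct paths from s to y in G, each of weight at most dist_G(s, C) + w(C), where dist_G(s, C) = min_{x ∈ V(C)} dist_G(s, x). -/

import Mathlib

/-- The weight of a walk: the sum of the weights of its edges (with multiplicity). -/
noncomputable def walkWeight {V : Type*} {G : SimpleGraph V} (w : Sym2 V → ℝ) {u v : V}
    (p : G.Walk u v) : ℝ := (p.edges.map w).sum

/-- The weighted distance between two vertices: the infimum of the weights of paths
between them. -/
noncomputable def gdist {V : Type*} (G : SimpleGraph V) (w : Sym2 V → ℝ) (u v : V) : ℝ :=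
  sInf {x : ℝ | ∃ p : G.Walk u v, p.IsPath ∧ walkWeight w p = x}

section Aux
variable {V : Type*} {G : SimpleGraph V} {w : Sym2 V → ℝ}

lemma walkWeight_nil {u : V} : walkWeight w (SimpleGraph.Walk.nil : G.Walk u u) = 0 := by
  simp [walkWeight]

lemma walkWeight_cons {u v x : V} (h : G.Adj u v) (p : G.Walk v x) :
    walkWeight w (SimpleGraph.Walk.cons h p) = w s(u, v) + walkWeight w p := by
  simp [walkWeight]

lemma walkWeight_append {u v x : V} (p : G.Walk u v) (q : G.Walk v x) :
    walkWeight w (p.append q) = walkWeight w p + walkWeight w q := by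
  simp [walkWeight, SimpleGraph.Walk.edges_append]

lemma walkWeight_reverse {u v : V} (p : G.Walk u v) :
    walkWeight w p.reverse = walkWeight w p := by
  simp [walkWeight, SimpleGraph.Walk.edges_reverse, List.map_reverse, List.sum_reverse]

lemma walkWeight_nonneg (hw : ∀ e ∈ G.edgeSet, 0 ≤ w e) {u v : V} (p : G.Walk u v) :
    0 ≤ walkWeight w p := by
  apply List.sum_nonneg
  intro r hr
  obtain ⟨e, he, rfl⟩ := List.mem_map.1 hr
  exact hw e (p.edges_subset_edgeSet he)

lemma exists_firstHit (hw : ∀ e ∈ G.edgeSet, 0 ≤ w e) (Cs : List V)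
    {s x : V} (p : G.Walk s x) (hp : p.IsPath) (hx : x ∈ Cs) :
    ∃ (t : V) (Q : G.Walk s t), Q.IsPath ∧ t ∈ Cs ∧
      (∀ z ∈ Q.support, z ∈ Cs → z = t) ∧ Q.support ⊆ p.support ∧
      walkWeight w Q ≤ walkWeight w p := by
  classical
  induction p with
  | nil =>
    exact ⟨_, SimpleGraph.Walk.nil, SimpleGraph.Walk.IsPath.nil, hx,
      by simp +contextual, by simp, le_refl _⟩
  | @cons a b c h q ih =>
    by_cases ha : a ∈ Cs
    · refine ⟨a, SimpleGraph.Walk.nil, SimpleGraph.Walk.IsPath.nil, ha,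
        by simp +contextual, by simp, ?_⟩
      rw [walkWeight_nil]
      exact walkWeight_nonneg hw _
    · obtain ⟨t, Q, hQ, htC, hmeet, hsub, hle⟩ := ih hp.of_cons hx
      have haQ : a ∉ Q.support := fun hm =>
        ((SimpleGraph.Walk.cons_isPath_iff h q).1 hp).2 (hsub hm)
      refine ⟨t, SimpleGraph.Walk.cons h Q, hQ.cons haQ, htC, ?_, ?_, ?_⟩
      · intro z hz hzC
        rw [SimpleGraph.Walk.support_cons, List.mem_cons] at hz
        rcases hz with rfl | hz
        · exact absurd hzC ha
        · exact hmeet z hz hzC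
      · rw [SimpleGraph.Walk.support_cons, SimpleGraph.Walk.support_cons]
        exact List.cons_subset_cons a hsub
      · rw [walkWeight_cons, walkWeight_cons]
        exact add_le_add_right hle _
end Aux

/-- In a connected finite simple graph with nonnegative edge weights, given a cycle `C` and a
vertex `s`, there exist a vertex `y` and two distinct paths from `s` to `y`, each of weight at
most `dist_G(s, C) + w(C)`, where `dist_G(s, C) = min_{x ∈ V(C)} dist_G(s, x)`. -/
theorem stmt5 {V : Type*} [Fintype V] (G : SimpleGraph V) (hG : G.Connected)
    (w : Sym2 V → ℝ) (hw : ∀ e ∈ G.edgeSet, 0 ≤ w e)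
    (u : V) (C : G.Walk u u) (hC : C.IsCycle) (s : V) :
    ∃ (y : V) (P₁ P₂ : G.Walk s y), P₁.IsPath ∧ P₂.IsPath ∧ P₁ ≠ P₂ ∧
      walkWeight w P₁ ≤ sInf {d : ℝ | ∃ x ∈ C.support, gdist G w s x = d} + walkWeight w C ∧
      walkWeight w P₂ ≤ sInf {d : ℝ | ∃ x ∈ C.support, gdist G w s x = d} + walkWeight w C := by
  classical
  set S := {d : ℝ | ∃ x ∈ C.support, gdist G w s x = d} with hSdef
  -- the infimum over the cycle is attained at some vertex x
  have hSn : S.Nonempty := ⟨gdist G w s u, u, C.start_mem_support, rfl⟩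
  have hSfin : S.Finite := by
    have : S = (gdist G w s) '' {x | x ∈ C.support} := by
      ext d; simp [hSdef, Set.mem_image]
    rw [this]
    exact (Set.toFinite _).image _
  obtain ⟨x, hxC, hxd⟩ := hSn.csInf_mem hSfin
  -- the distance gdist s x is attained by a path p
  obtain ⟨p, hpPath, hpW⟩ : ∃ p : G.Walk s x, p.IsPath ∧ walkWeight w p = gdist G w s x := by
    have hne : {r : ℝ | ∃ p : G.Walk s x, p.IsPath ∧ walkWeight w p = r}.Nonempty := by
      obtain ⟨q⟩ := hG.preconnected s x
      exact ⟨walkWeight w (q.toPath : G.Walk s x), (q.toPath : G.Walk s x), q.toPath.2, rfl⟩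
    have hfin : {r : ℝ | ∃ p : G.Walk s x, p.IsPath ∧ walkWeight w p = r}.Finite := by
      have : {r : ℝ | ∃ p : G.Walk s x, p.IsPath ∧ walkWeight w p = r} =
          Set.range (fun q : G.Path s x => walkWeight w (q : G.Walk s x)) := by
        ext r
        constructor
        · rintro ⟨p, hp, rfl⟩; exact ⟨⟨p, hp⟩, rfl⟩
        · rintro ⟨⟨p, hp⟩, rfl⟩; exact ⟨p, hp, rfl⟩
      rw [this]; exact Set.finite_range _
    exact hne.csInf_mem hfin
  -- take the first vertex t of p lying on C
  obtain ⟨t, Q, hQ, htC, hmeet, -, hQle⟩ := exists_firstHit hw C.support p hpPath hxC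
  have hQD : walkWeight w Q ≤ sInf S := by
    calc walkWeight w Q ≤ walkWeight w p := hQle
    _ = sInf S := by rw [hpW, hxd]
  -- rotate the cycle to start at t
  have hC' : (C.rotate t htC).IsCycle := hC.rotate htC
  have hWC' : walkWeight w (C.rotate t htC) = walkWeight w C := by
    unfold walkWeight
    exact ((C.rotate_edges t htC).perm.map w).sum_eq
  have hLC' : (C.rotate t htC).length = C.length := by
    rw [SimpleGraph.Walk.rotate, SimpleGraph.Walk.length_append, add_comm,
      ← SimpleGraph.Walk.length_append, SimpleGraph.Walk.take_spec]
  have hsupC' : ∀ z ∈ (C.rotate t htC).support, z ∈ C.support := by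
    intro z hz
    rw [SimpleGraph.Walk.support_eq_cons, List.mem_cons] at hz
    rcases hz with rfl | hz
    · exact htC
    · have : z ∈ C.support.tail := ((C.support_rotate t htC).perm).mem_iff.1 hz
      rw [SimpleGraph.Walk.support_eq_cons]
      exact List.mem_cons_of_mem _ this
  obtain ⟨v, h, R, hR⟩ : ∃ (v : V) (h : G.Adj t v) (R : G.Walk v t),
      C.rotate t htC = SimpleGraph.Walk.cons h R := by
    cases hcc : C.rotate t htC with
    | nil => exact absurd hcc hC'.ne_nil
    | cons h R => exact ⟨_, h, R, rfl⟩
  rw [hR] at hC' hWC' hLC' hsupC'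
  obtain ⟨hRpath, -⟩ := (SimpleGraph.Walk.cons_isCycle_iff R h).1 hC'
  -- basic facts
  have hwe : 0 ≤ w s(t, v) := hw _ h
  have hRnn : 0 ≤ walkWeight w R := walkWeight_nonneg hw R
  have hWCsplit : w s(t, v) + walkWeight w R = walkWeight w C := by
    rw [← hWC', walkWeight_cons]
  have hRsub : ∀ z ∈ R.support, z ∈ C.support := fun z hz =>
    hsupC' z (by rw [SimpleGraph.Walk.support_cons]; exact List.mem_cons_of_mem _ hz)
  have hvC : v ∈ C.support := hRsub v R.start_mem_support
  have hvt : v ≠ t := h.ne'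
  have hvQ : v ∉ Q.support := fun hm => hvt (hmeet v hm hvC)
  -- the two paths
  refine ⟨v, Q.append (SimpleGraph.Walk.cons h SimpleGraph.Walk.nil), Q.append R.reverse,
    ?_, ?_, ?_, ?_, ?_⟩
  · -- P₁ is a path
    rw [SimpleGraph.Walk.isPath_def, SimpleGraph.Walk.support_append]
    apply List.Nodup.append hQ.support_nodup (by simp)
    intro z hz hz'
    simp only [SimpleGraph.Walk.support_cons, SimpleGraph.Walk.support_nil, List.tail_cons,
      List.mem_singleton] at hz'
    exact hvQ (hz' ▸ hz)
  · -- P₂ is a path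
    rw [SimpleGraph.Walk.isPath_def, SimpleGraph.Walk.support_append]
    have hRrev : R.reverse.IsPath := hRpath.reverse
    apply List.Nodup.append hQ.support_nodup (hRrev.support_nodup.sublist (List.tail_sublist _))
    intro z hz hz'
    have htail : z ∈ R.reverse.support.tail := hz'
    have hzRs : z ∈ R.support := by
      have : z ∈ R.reverse.support := List.mem_of_mem_tail htail
      rwa [SimpleGraph.Walk.support_reverse, List.mem_reverse] at this
    have hzt : z = t := hmeet z hz (hRsub z hzRs)
    have hnot : t ∉ R.reverse.support.tail := by
      have := hRrev.support_nodup
      rw [SimpleGraph.Walk.support_eq_cons] at this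
      exact (List.nodup_cons.1 this).1
    exact hnot (hzt ▸ htail)
  · -- distinct
    intro hEq
    have hlen := congrArg SimpleGraph.Walk.length hEq
    rw [SimpleGraph.Walk.length_append, SimpleGraph.Walk.length_append,
      SimpleGraph.Walk.length_reverse] at hlen
    simp only [SimpleGraph.Walk.length_cons, SimpleGraph.Walk.length_nil] at hlen
    have h3 : 3 ≤ C.length := hC.three_le_length
    rw [SimpleGraph.Walk.length_cons] at hLC'
    omega
  · -- weight of P₁
    rw [walkWeight_append, walkWeight_cons, walkWeight_nil]
    have : w s(t, v) ≤ walkWeight w C := by linarith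
    linarith [hQD]
  · -- weight of P₂
    rw [walkWeight_append, walkWeight_reverse]
    have : walkWeight w R ≤ walkWeight w C := by linarith
    linarith [hQD]
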